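/- (Nagel's identity) For every integer n ≥ 0, every real N > 0 and every real X: H_n^N(X√N) = (n!/N^{n/2}) · (1+X²)^{n/2} · C_n^N(X/√(1+X²)). -/

import Mathlib

open Finset Polynomial

/-- The relativistic Hermite polynomial `H_n^N(X)` (real parameter `N > 0`). -/
noncomputable def RH (n : ℕ) (N X : ℝ) : ℝ :=
  ((ascPochhammer ℝ n).eval (2 * N) / (2 * Real.sqrt N) ^ n) *
    ∑ k ∈ Finset.range (n / 2 + 1),
      (-1) ^ k / (ascPochhammer ℝ k).eval (N + 1 / 2) *
        ((n.factorial : ℝ) / (((n - 2 * k).factorial : ℝ) * (k.factorial : ℝ))) *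
        (2 * X / Real.sqrt N) ^ (n - 2 * k)

/-- The Gegenbauer polynomial `C_n^N(X)` (real parameter and argument). -/
noncomputable def Geg (n : ℕ) (N X : ℝ) : ℝ :=
  ∑ k ∈ Finset.range (n / 2 + 1),
    (-1) ^ k * ((ascPochhammer ℝ (n - k)).eval N /
      (((n - 2 * k).factorial : ℝ) * (k.factorial : ℝ))) * (2 * X) ^ (n - 2 * k)

private lemma poch_add_eval (a b : ℕ) (x : ℝ) :
    (ascPochhammer ℝ (a + b)).eval x =
      (ascPochhammer ℝ a).eval x * (ascPochhammer ℝ b).eval (x + a) := by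
  rw [← ascPochhammer_mul, eval_mul, eval_comp, eval_add, eval_X, eval_natCast]

private lemma poch_dup (m : ℕ) (N : ℝ) :
    (ascPochhammer ℝ (2 * m)).eval (2 * N) =
      4 ^ m * (ascPochhammer ℝ m).eval N * (ascPochhammer ℝ m).eval (N + 1 / 2) := by
  induction m with
  | zero => simp
  | succ m ih =>
    have h2 : 2 * (m + 1) = 2 * m + 1 + 1 := by ring
    rw [h2, ascPochhammer_succ_eval, ascPochhammer_succ_eval, ih,
      ascPochhammer_succ_eval, ascPochhammer_succ_eval]
    push_cast
    ring

noncomputable def Tk (M : ℝ) (p l : ℕ) : ℝ :=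
  if 2 * l ≤ p then
    (-1) ^ l * (ascPochhammer ℝ (p - l)).eval M * 2 ^ (p - 2 * l) /
      (((p - 2 * l).factorial : ℝ) * (l.factorial : ℝ))
  else 0

private lemma termwise (M : ℝ) (q l : ℕ) :
    ((q : ℝ) + 2) * Tk M (q + 2) l =
      2 * (M + (q : ℝ) + 1) * Tk M (q + 1) l -
        ((q : ℝ) + 2 * M) * (if l = 0 then 0 else Tk M q (l - 1)) := by
  match l with
  | 0 =>
    simp only [Tk, if_pos (by omega : 2 * 0 ≤ q + 2), if_pos (by omega : 2 * 0 ≤ q + 1),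
      if_pos rfl]
    simp only [Nat.sub_zero, Nat.mul_zero, pow_zero, Nat.factorial]
    rw [show q + 2 = (q + 1) + 1 from rfl, ascPochhammer_succ_eval]
    push_cast [Nat.factorial_succ]
    have h1 : ((q+1).factorial : ℝ) ≠ 0 := by positivity
    field_simp
    ring
  | (l + 1) =>
    simp only [if_neg (Nat.succ_ne_zero l), Nat.add_sub_cancel]
    rcases le_or_gt (2 * (l + 1)) (q + 1) with hint | hbd
    · -- interior: q = 2l + 1 + c
      obtain ⟨c, hc⟩ : ∃ c, q = 2 * l + 1 + c := ⟨q - (2*l+1), by omega⟩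
      subst hc
      simp only [Tk, if_pos (by omega : 2 * (l+1) ≤ 2*l+1+c + 2),
        if_pos (by omega : 2 * (l+1) ≤ 2*l+1+c + 1), if_pos (by omega : 2 * l ≤ 2*l+1+c)]
      rw [show 2*l+1+c + 2 - (l+1) = (l + c + 1) + 1 by omega,
          show 2*l+1+c + 2 - 2*(l+1) = c + 1 by omega,
          show 2*l+1+c + 1 - (l+1) = l + c + 1 by omega,
          show 2*l+1+c + 1 - 2*(l+1) = c by omega,
          show 2*l+1+c - l = l + c + 1 by omega,
          show 2*l+1+c - 2*l = c + 1 by omega,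
          ascPochhammer_succ_eval]
      push_cast [Nat.factorial_succ, pow_succ]
      have h1 : ((l + c + 1).factorial : ℝ) ≠ 0 := by positivity
      have h2 : ((c).factorial : ℝ) ≠ 0 := by positivity
      have h3 : ((l).factorial : ℝ) ≠ 0 := by positivity
      field_simp
      ring
    · rcases le_or_gt (2 * (l + 1)) (q + 2) with heq | hout
      · -- boundary: q = 2l
        have hq : q = 2 * l := by omega
        subst hq
        simp only [Tk, if_pos (by omega : 2 * (l+1) ≤ 2*l + 2),
          if_neg (by omega : ¬ 2 * (l+1) ≤ 2*l + 1), if_pos (by omega : 2 * l ≤ 2*l)]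
        rw [show 2*l + 2 - (l+1) = l + 1 by omega,
            show 2*l + 2 - 2*(l+1) = 0 by omega,
            show 2*l - l = l by omega,
            show 2*l - 2*l = 0 by omega,
            ascPochhammer_succ_eval]
        push_cast [Nat.factorial_succ, pow_succ]
        have h3 : ((l).factorial : ℝ) ≠ 0 := by positivity
        field_simp
        ring
      · -- all zero
        simp only [Tk, if_neg (by omega : ¬ 2 * (l+1) ≤ q + 2),
          if_neg (by omega : ¬ 2 * (l+1) ≤ q + 1), if_neg (by omega : ¬ 2 * l ≤ q)]
        ring

lemma key (M : ℝ) : ∀ p : ℕ, ∑ l ∈ range (p + 1), Tk M p l =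
    (ascPochhammer ℝ p).eval (2 * M) / (p.factorial : ℝ) := by
  intro p
  induction p using Nat.strong_induction_on with
  | _ p ih =>
    match p with
    | 0 => simp [Tk]
    | 1 =>
      rw [Finset.sum_range_succ, Finset.sum_range_one]
      norm_num [Tk, Nat.factorial]
      ring
    | (q + 2) =>
      have h1 := ih (q + 1) (by omega)
      have h0 := ih q (by omega)
      have hrec : ((q : ℝ) + 2) * ∑ l ∈ range (q + 3), Tk M (q + 2) l =
          2 * (M + (q : ℝ) + 1) * ∑ l ∈ range (q + 2), Tk M (q + 1) l -
            ((q : ℝ) + 2 * M) * ∑ l ∈ range (q + 1), Tk M q l := by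
        have e1 : ∑ l ∈ range (q + 2), Tk M (q + 1) l = ∑ l ∈ range (q + 3), Tk M (q + 1) l := by
          rw [Finset.sum_range_succ (n := q + 2)]
          have : Tk M (q + 1) (q + 2) = 0 := by
            simp [Tk, if_neg (by omega : ¬ 2 * (q + 2) ≤ q + 1)]
          rw [this, add_zero]
        have e2 : ∑ l ∈ range (q + 1), Tk M q l =
            ∑ l ∈ range (q + 3), (if l = 0 then 0 else Tk M q (l - 1)) := by
          rw [Finset.sum_range_succ' (fun l => if l = 0 then 0 else Tk M q (l - 1)) (q + 2)]
          simp only [Nat.succ_ne_zero, ite_false, ite_true, Nat.add_sub_cancel, add_zero]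
          rw [Finset.sum_range_succ (n := q + 1)]
          have : Tk M q (q + 1) = 0 := by
            simp [Tk, if_neg (by omega : ¬ 2 * (q + 1) ≤ q)]
          rw [this, add_zero]
        rw [e1, e2, Finset.mul_sum, Finset.mul_sum, Finset.mul_sum, ← Finset.sum_sub_distrib]
        apply Finset.sum_congr rfl
        intro l _
        exact termwise M q l
      have hne : ((q : ℝ) + 2) ≠ 0 := by positivity
      apply mul_left_cancel₀ hne
      have e3 : (ascPochhammer ℝ (q + 1)).eval (2 * M) =
          (ascPochhammer ℝ q).eval (2 * M) * (2 * M + q) := by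
        rw [ascPochhammer_succ_eval]
      have e4 : (ascPochhammer ℝ (q + 2)).eval (2 * M) =
          (ascPochhammer ℝ q).eval (2 * M) * (2 * M + q) * (2 * M + q + 1) := by
        rw [show q + 2 = (q + 1) + 1 from rfl, ascPochhammer_succ_eval, e3]
        push_cast
        ring
      rw [hrec, h1, h0, e4, e3]
      push_cast [Nat.factorial_succ]
      have hq1 : ((q).factorial : ℝ) ≠ 0 := by positivity
      field_simp
      ring

lemma key' (M : ℝ) (p : ℕ) :
    ∑ l ∈ Finset.range (p / 2 + 1),
      (-1) ^ l * (ascPochhammer ℝ (p - l)).eval M * 2 ^ (p - 2 * l) /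
        (((p - 2 * l).factorial : ℝ) * (l.factorial : ℝ)) =
      (ascPochhammer ℝ p).eval (2 * M) / (p.factorial : ℝ) := by
  rw [← key M p]
  have h1 : ∀ l ∈ Finset.range (p / 2 + 1),
      (-1) ^ l * (ascPochhammer ℝ (p - l)).eval M * 2 ^ (p - 2 * l) /
        (((p - 2 * l).factorial : ℝ) * (l.factorial : ℝ)) = Tk M p l := by
    intro l hl
    simp only [Finset.mem_range] at hl
    exact (if_pos (by omega)).symm
  rw [Finset.sum_congr rfl h1]
  exact Finset.sum_subset (Finset.range_subset_range.mpr (by omega))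
    (fun l _ hl => if_neg (by simp only [Finset.mem_range] at hl; omega))

lemma sum_triangle {β : Type*} [AddCommMonoid β] (K : ℕ) (f : ℕ → ℕ → β) :
    ∑ k ∈ Finset.range (K + 1), ∑ j ∈ Finset.range (k + 1), f k j =
      ∑ m ∈ Finset.range (K + 1), ∑ j ∈ Finset.range (K + 1 - m), f (m + j) j := by
  rw [Finset.sum_sigma', Finset.sum_sigma']
  apply Finset.sum_nbij' (fun x => (⟨x.1 - x.2, x.2⟩ : Σ _ : ℕ, ℕ))
    (fun x => (⟨x.1 + x.2, x.2⟩ : Σ _ : ℕ, ℕ))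
  · rintro ⟨k, j⟩ h
    simp only [Finset.mem_sigma, Finset.mem_range] at h ⊢
    omega
  · rintro ⟨m, j⟩ h
    simp only [Finset.mem_sigma, Finset.mem_range] at h ⊢
    omega
  · rintro ⟨k, j⟩ h
    simp only [Finset.mem_sigma, Finset.mem_range] at h
    rw [show k - j + j = k by omega]
  · rintro ⟨m, j⟩ h
    simp only [Finset.mem_sigma, Finset.mem_range] at h
    rw [show m + j - j = m by omega]
  · rintro ⟨k, j⟩ h
    simp only [Finset.mem_sigma, Finset.mem_range] at h
    dsimp only
    rw [show k - j + j = k by omega]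

noncomputable def CS (n : ℕ) (N X r : ℝ) : ℝ :=
  ∑ m ∈ Finset.range (n / 2 + 1),
    (-1) ^ m * (n.factorial : ℝ) * (ascPochhammer ℝ m).eval N *
      (ascPochhammer ℝ (n - 2 * m)).eval (2 * (N + (m : ℝ))) /
      (r ^ n * (m.factorial : ℝ) * 2 ^ (n - 2 * m) * ((n - 2 * m).factorial : ℝ)) *
      (2 * X) ^ (n - 2 * m)

private lemma lhs_eq (n : ℕ) (N : ℝ) (hN : 0 < N) (X : ℝ) :
    RH n N (X * Real.sqrt N) = CS n N X (Real.sqrt N) := by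
  set r := Real.sqrt N with hrdef
  have hr0 : 0 < r := Real.sqrt_pos.mpr hN
  have harg : 2 * (X * r) / r = 2 * X := by
    rw [mul_div_assoc, mul_div_cancel_right₀ X (ne_of_gt hr0)]
  rw [RH, CS, ← hrdef, harg, Finset.mul_sum]
  apply Finset.sum_congr rfl
  intro m hm
  simp only [Finset.mem_range] at hm
  have h2m : 2 * m ≤ n := by omega
  -- split the Pochhammer
  have hsplit : (ascPochhammer ℝ n).eval (2 * N) =
      (ascPochhammer ℝ (2 * m)).eval (2 * N) *
        (ascPochhammer ℝ (n - 2 * m)).eval (2 * (N + (m : ℝ))) := by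
    have h := poch_add_eval (2 * m) (n - 2 * m) (2 * N)
    rw [show 2 * m + (n - 2 * m) = n by omega] at h
    rw [h]
    congr 1
    push_cast
    ring
  have hpow2 : ((2 : ℝ)) ^ n = 4 ^ m * 2 ^ (n - 2 * m) := by
    rw [show (4 : ℝ) ^ m = 2 ^ (2 * m) by rw [pow_mul]; norm_num, ← pow_add]
    congr 1
    omega
  have hposm : (0 : ℝ) < (ascPochhammer ℝ m).eval (N + 1 / 2) :=
    ascPochhammer_pos m _ (by linarith)
  rw [hsplit, poch_dup, mul_pow, hpow2]
  have f1 : ((n - 2 * m).factorial : ℝ) ≠ 0 := by positivity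
  have f2 : ((m).factorial : ℝ) ≠ 0 := by positivity
  have f3 : (r : ℝ) ≠ 0 := ne_of_gt hr0
  have f4 : (ascPochhammer ℝ m).eval (N + 1 / 2) ≠ 0 := ne_of_gt hposm
  rw [div_mul_div_comm, div_mul_eq_mul_div, div_mul_eq_mul_div, ← mul_div_assoc, div_div,
    div_mul_eq_mul_div, div_eq_div_iff]
  · ring
  · exact mul_ne_zero (mul_ne_zero f4 (mul_ne_zero f1 f2))
      (mul_ne_zero (mul_ne_zero (by positivity) (by positivity)) (pow_ne_zero n f3))
  · exact mul_ne_zero (mul_ne_zero (mul_ne_zero (pow_ne_zero n f3) f2) (by positivity)) f1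

noncomputable def gterm (n : ℕ) (N X r : ℝ) (k j : ℕ) : ℝ :=
  (n.factorial : ℝ) * (-1) ^ k * (ascPochhammer ℝ (n - k)).eval N /
    (((n - 2 * k).factorial : ℝ) * (k.factorial : ℝ)) * ((k.choose j : ℕ) : ℝ) *
    ((2 * X) ^ (n - 2 * (k - j)) * (1 / 4) ^ j) / r ^ n

private lemma rhs_eq (n : ℕ) (N : ℝ) (hN : 0 < N) (X : ℝ) :
    (n.factorial : ℝ) / N ^ ((n : ℝ) / 2) * (1 + X ^ 2) ^ ((n : ℝ) / 2) *
        Geg n N (X / Real.sqrt (1 + X ^ 2)) = CS n N X (Real.sqrt N) := by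
  have hX : (0 : ℝ) < 1 + X ^ 2 := by positivity
  set r := Real.sqrt N with hrdef
  set s := Real.sqrt (1 + X ^ 2) with hsdef
  have hr0 : 0 < r := Real.sqrt_pos.mpr hN
  have hs0 : 0 < s := Real.sqrt_pos.mpr hX
  have hs2 : s ^ 2 = 1 + X ^ 2 := Real.sq_sqrt hX.le
  have hNr : N ^ ((n : ℝ) / 2) = r ^ n := by
    rw [hrdef, Real.sqrt_eq_rpow, ← Real.rpow_natCast (N ^ ((1:ℝ)/2)) n,
      ← Real.rpow_mul hN.le]
    congr 1
    ring
  have hXs : (1 + X ^ 2) ^ ((n : ℝ) / 2) = s ^ n := by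
    rw [hsdef, Real.sqrt_eq_rpow, ← Real.rpow_natCast ((1 + X^2) ^ ((1:ℝ)/2)) n,
      ← Real.rpow_mul hX.le]
    congr 1
    ring
  rw [Geg, hNr, hXs, mul_assoc, Finset.mul_sum, Finset.mul_sum]
  have stepA : ∀ k ∈ Finset.range (n / 2 + 1),
      (n.factorial : ℝ) / r ^ n * (s ^ n *
        ((-1) ^ k * ((ascPochhammer ℝ (n - k)).eval N /
          (((n - 2 * k).factorial : ℝ) * (k.factorial : ℝ))) * (2 * (X / s)) ^ (n - 2 * k))) =
      ∑ j ∈ Finset.range (k + 1), gterm n N X r k j := by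
    intro k hk
    simp only [Finset.mem_range] at hk
    have h2k : 2 * k ≤ n := by omega
    have hss : s ^ n * (2 * (X / s)) ^ (n - 2 * k) = (2 * X) ^ (n - 2 * k) * (1 + X ^ 2) ^ k := by
      rw [show 2 * (X / s) = 2 * X / s by ring, div_pow,
        show s ^ n = (s ^ 2) ^ k * s ^ (n - 2 * k) by
          rw [← pow_mul, ← pow_add]; congr 1; omega, hs2]
      field_simp
    trans ((n.factorial : ℝ) / r ^ n *
        ((-1) ^ k * ((ascPochhammer ℝ (n - k)).eval N /
          (((n - 2 * k).factorial : ℝ) * (k.factorial : ℝ))) * (2 * X) ^ (n - 2 * k)) *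
        (1 + X ^ 2) ^ k)
    · linear_combination ((n.factorial : ℝ) / r ^ n *
        ((-1) ^ k * ((ascPochhammer ℝ (n - k)).eval N /
          (((n - 2 * k).factorial : ℝ) * (k.factorial : ℝ))))) * hss
    · have hbin : (1 + X ^ 2) ^ k
          = ∑ j ∈ Finset.range (k + 1), (X ^ 2) ^ j * ((k.choose j : ℕ) : ℝ) := by
        rw [add_comm (1:ℝ) (X^2), add_pow]
        apply Finset.sum_congr rfl
        intro j _
        rw [one_pow, mul_one]
      rw [hbin, Finset.mul_sum]
      apply Finset.sum_congr rfl
      intro j hj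
      simp only [Finset.mem_range] at hj
      have hjk : j ≤ k := by omega
      have hXj : (X ^ 2) ^ j = (2 * X) ^ (2 * j) * (1 / 4) ^ j := by
        rw [pow_mul, ← mul_pow]
        congr 1
        ring
      have hXpow : (2 * X) ^ (n - 2 * k) * (X ^ 2) ^ j
          = (2 * X) ^ (n - 2 * (k - j)) * (1/4) ^ j := by
        rw [hXj, ← mul_assoc, ← pow_add]
        congr 2
        omega
      rw [gterm, ← hXpow]
      ring
  rw [Finset.sum_congr rfl stepA, sum_triangle]
  rw [CS]
  apply Finset.sum_congr rfl
  intro m hm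
  simp only [Finset.mem_range] at hm
  have h2m : 2 * m ≤ n := by omega
  have hrange : n / 2 + 1 - m = (n - 2 * m) / 2 + 1 := by omega
  rw [hrange]
  have stepC : ∀ j ∈ Finset.range ((n - 2 * m) / 2 + 1),
      gterm n N X r (m + j) j =
        ((-1) ^ m * (n.factorial : ℝ) * (ascPochhammer ℝ m).eval N * (2 * X) ^ (n - 2 * m) /
          (r ^ n * (m.factorial : ℝ) * 2 ^ (n - 2 * m))) *
        ((-1) ^ j * (ascPochhammer ℝ ((n - 2 * m) - j)).eval (N + (m : ℝ)) * 2 ^ ((n - 2 * m) - 2 * j) /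
          ((((n - 2 * m) - 2 * j).factorial : ℝ) * (j.factorial : ℝ))) := by
    intro j hj
    simp only [Finset.mem_range] at hj
    have h2j : 2 * j ≤ n - 2 * m := by omega
    rw [gterm]
    rw [show m + j - j = m by omega]
    rw [show n - (m + j) = m + ((n - 2 * m) - j) by omega, poch_add_eval]
    rw [show n - 2 * (m + j) = (n - 2 * m) - 2 * j by omega]
    have hcf : (((m + j).choose j : ℕ) : ℝ) * (m.factorial : ℝ) * (j.factorial : ℝ)
        = ((m + j).factorial : ℝ) := by
      exact_mod_cast congrArg (Nat.cast : ℕ → ℝ) (Nat.add_choose_mul_factorial_mul_factorial m j)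
    have hpq : ((2:ℝ)) ^ ((n - 2*m) - 2*j) * 4 ^ j = 2 ^ (n - 2*m) := by
      rw [show (4:ℝ) ^ j = 2 ^ (2*j) by rw [pow_mul]; norm_num, ← pow_add]
      congr 1
      omega
    have fm : ((m).factorial : ℝ) ≠ 0 := by positivity
    have fj : ((j).factorial : ℝ) ≠ 0 := by positivity
    have fmj : (((m+j)).factorial : ℝ) ≠ 0 := by positivity
    have fp : ((((n-2*m) - 2*j)).factorial : ℝ) ≠ 0 := by positivity
    have fr : r ^ n ≠ 0 := pow_ne_zero n (ne_of_gt hr0)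
    have hfour : ((1:ℝ)/4) ^ j = 2 ^ ((n - 2*m) - 2*j) / 2 ^ (n - 2*m) := by
      rw [← hpq]
      field_simp
      rw [← mul_pow]; norm_num
    have hc : (((m + j).choose j : ℕ) : ℝ)
        = ((m + j).factorial : ℝ) / ((m.factorial : ℝ) * (j.factorial : ℝ)) := by
      field_simp
      linear_combination hcf
    rw [hfour, pow_add, hc]
    field_simp
  rw [Finset.sum_congr rfl stepC, ← Finset.mul_sum, key' (N + (m : ℝ)) (n - 2 * m)]
  have fm : ((m).factorial : ℝ) ≠ 0 := by positivity
  have fp : (((n - 2*m)).factorial : ℝ) ≠ 0 := by positivity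
  have fr : r ^ n ≠ 0 := pow_ne_zero n (ne_of_gt hr0)
  field_simp


/-- Nagel's identity:
`H_n^N(X√N) = (n!/N^(n/2)) (1+X²)^(n/2) C_n^N(X/√(1+X²))`. -/
theorem nagel_identity (n : ℕ) (N : ℝ) (hN : 0 < N) (X : ℝ) :
    RH n N (X * Real.sqrt N) =
      (n.factorial : ℝ) / N ^ ((n : ℝ) / 2) * (1 + X ^ 2) ^ ((n : ℝ) / 2) *
        Geg n N (X / Real.sqrt (1 + X ^ 2)) :=
  (lhs_eq n N hN X).trans (rhs_eq n N hN X).symm
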